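/- Let M > 0, a > 3√3·M, H ∈ ℝ with H ≠ 0, and s ∈ ℝ. Let r₁ < r₂ be the two positive roots of r ↦ κ(r) := 1 − 2M/r − r²/a², and define σ : (r₁, r₂) → ℝ by σ(r) = s·κ(r)^(1/2) + (H/a²)·κ(r)^(1/2)·∫_{3M}^r x·κ(x)^(−3/2) dx. Then there exists exactly one r₀ ∈ (r₁, r₂) with σ(r₀) = 0. -/

import Mathlib

open MeasureTheory


lemma ftc_right (e p q : ℝ) (hpq : p ≤ q) (hq : q < e) :
    ∫ x in p..q, (e - x) ^ (-(3:ℝ)/2) =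
      2 * (e-q) ^ (-(1:ℝ)/2) - 2 * (e-p) ^ (-(1:ℝ)/2) := by
  have h : ∀ x ∈ Set.uIcc p q, HasDerivAt (fun y => 2 * (e - y) ^ (-(1:ℝ)/2))
      ((e - x) ^ (-(3:ℝ)/2)) x := by
    intro x hx
    rw [Set.uIcc_of_le hpq] at hx
    have hex : 0 < e - x := by linarith [hx.2]
    have h1 : HasDerivAt (fun y : ℝ => e - y) (-1) x := (hasDerivAt_id x).const_sub e
    have h2 := (h1.rpow_const (p := -(1:ℝ)/2) (Or.inl hex.ne')).const_mul 2
    refine h2.congr_deriv ?_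
    have : (-(1:ℝ)/2 - 1) = -(3:ℝ)/2 := by norm_num
    rw [← this]
    ring
  have hcont : IntervalIntegrable (fun x => (e - x) ^ (-(3:ℝ)/2)) volume p q := by
    apply ContinuousOn.intervalIntegrable
    apply ContinuousOn.rpow_const
    · exact (continuousOn_const.sub continuousOn_id)
    · intro x hx
      rw [Set.uIcc_of_le hpq] at hx
      have : 0 < e - x := by linarith [hx.2]
      exact Or.inl this.ne'
  rw [intervalIntegral.integral_eq_sub_of_hasDerivAt h hcont]

lemma ftc_left (e p q : ℝ) (hpq : p ≤ q) (hp : e < p) :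
    ∫ x in p..q, (x - e) ^ (-(3:ℝ)/2) =
      2 * (p-e) ^ (-(1:ℝ)/2) - 2 * (q-e) ^ (-(1:ℝ)/2) := by
  have h : ∀ x ∈ Set.uIcc p q, HasDerivAt (fun y => -(2 * (y - e) ^ (-(1:ℝ)/2)))
      ((x - e) ^ (-(3:ℝ)/2)) x := by
    intro x hx
    rw [Set.uIcc_of_le hpq] at hx
    have hex : 0 < x - e := by linarith [hx.1]
    have h1 : HasDerivAt (fun y : ℝ => y - e) 1 x := (hasDerivAt_id x).sub_const e
    have h2 := (((h1.rpow_const (p := -(1:ℝ)/2) (Or.inl hex.ne'))).const_mul 2).neg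
    refine h2.congr_deriv ?_
    have : (-(1:ℝ)/2 - 1) = -(3:ℝ)/2 := by norm_num
    rw [← this]
    ring
  have hcont : IntervalIntegrable (fun x => (x - e) ^ (-(3:ℝ)/2)) volume p q := by
    apply ContinuousOn.intervalIntegrable
    apply ContinuousOn.rpow_const
    · exact (continuousOn_id.sub continuousOn_const)
    · intro x hx
      rw [Set.uIcc_of_le hpq] at hx
      have : 0 < x - e := by linarith [hx.1]
      exact Or.inl this.ne'
  rw [intervalIntegral.integral_eq_sub_of_hasDerivAt h hcont]
  ring


set_option maxHeartbeats 1000000 in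
/-- The metric coefficient `σ` of the closed (K = +1) McVittie spacetime
at an instant with Hubble value `H ≠ 0` has exactly one zero `r₀` in the allowed interval
`(r₁, r₂)`. -/
theorem mcvittie_closed_sigma_unique_zero (M a H s r₁ r₂ : ℝ) (hM : 0 < M)
    (ha : 3 * Real.sqrt 3 * M < a) (hH : H ≠ 0)
    (hr₁pos : 0 < r₁) (hlt : r₁ < r₂)
    (hroot₁ : 1 - 2 * M / r₁ - r₁ ^ 2 / a ^ 2 = 0)
    (hroot₂ : 1 - 2 * M / r₂ - r₂ ^ 2 / a ^ 2 = 0)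
    (σ : ℝ → ℝ)
    (hσ : ∀ r ∈ Set.Ioo r₁ r₂,
      σ r = s * (1 - 2 * M / r - r ^ 2 / a ^ 2) ^ ((1 : ℝ) / 2) +
        (H / a ^ 2) * (1 - 2 * M / r - r ^ 2 / a ^ 2) ^ ((1 : ℝ) / 2) *
          ∫ x in (3 * M)..r, x * (1 - 2 * M / x - x ^ 2 / a ^ 2) ^ (-(3 : ℝ) / 2)) :
    ∃! r₀ : ℝ, r₀ ∈ Set.Ioo r₁ r₂ ∧ σ r₀ = 0 := by
  set κ : ℝ → ℝ := fun r => 1 - 2 * M / r - r ^ 2 / a ^ 2 with hκdef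
  set g : ℝ → ℝ := fun x => x * κ x ^ (-(3 : ℝ) / 2) with hgdef
  set F : ℝ → ℝ := fun r => ∫ x in (3 * M)..r, g x with hFdef
  -- basic positivity
  have ha0 : 0 < a := by
    have h3 : 0 < Real.sqrt 3 := Real.sqrt_pos.mpr (by norm_num)
    nlinarith
  have ha27 : 27 * M ^ 2 < a ^ 2 := by
    have h3 : Real.sqrt 3 ^ 2 = 3 := Real.sq_sqrt (by norm_num)
    have h3p : 0 < Real.sqrt 3 := Real.sqrt_pos.mpr (by norm_num)
    have h1 : 0 < a - 3 * Real.sqrt 3 * M := by linarith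
    have h2 : 0 < a + 3 * Real.sqrt 3 * M := by nlinarith
    nlinarith [mul_pos h1 h2]
  have hr₂pos : 0 < r₂ := lt_trans hr₁pos hlt
  -- Vieta relations
  have h1 : r₁ * a ^ 2 - 2 * M * a ^ 2 - r₁ ^ 3 = 0 := by
    have h := hroot₁
    field_simp at h
    nlinarith [h]
  have h2 : r₂ * a ^ 2 - 2 * M * a ^ 2 - r₂ ^ 3 = 0 := by
    have h := hroot₂
    field_simp at h
    nlinarith [h]
  have e1 : a ^ 2 = r₁ ^ 2 + r₁ * r₂ + r₂ ^ 2 := by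
    have hne : r₁ - r₂ ≠ 0 := by intro h; linarith [hlt]
    have key : (r₁ - r₂) * (a ^ 2 - (r₁ ^ 2 + r₁ * r₂ + r₂ ^ 2)) = 0 := by linear_combination h1 - h2
    rcases mul_eq_zero.mp key with h | h
    · exact absurd h hne
    · linarith
  have e2 : 2 * M * a ^ 2 = r₁ ^ 2 * r₂ + r₁ * r₂ ^ 2 := by linear_combination r₁ * e1 - h1
  -- factorization of κ
  have hκeq : ∀ r : ℝ, 0 < r →
      κ r = (r - r₁) * (r₂ - r) * (r + r₁ + r₂) / (a ^ 2 * r) := by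
    intro r hr
    rw [hκdef, eq_div_iff (by positivity)]
    field_simp
    linear_combination (r * e1 - e2)
  have hκpos : ∀ r ∈ Set.Ioo r₁ r₂, 0 < κ r := by
    intro r hr
    have hrpos : 0 < r := lt_trans hr₁pos hr.1
    rw [hκeq r hrpos]
    have h1' : 0 < r - r₁ := by linarith [hr.1]
    have h2' : 0 < r₂ - r := by linarith [hr.2]
    have h3' : 0 < r + r₁ + r₂ := by linarith
    positivity
  -- 3M is in the interval
  have hκ3M : 0 < κ (3 * M) := by
    rw [hκdef]
    simp only
    have h3M : (0:ℝ) < 3 * M := by linarith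
    have hq : 2 * M / (3 * M) = 2 / 3 := by
      rw [div_eq_iff (by positivity)]; ring
    rw [hq]
    have : (3 * M) ^ 2 / a ^ 2 < 1 / 3 := by
      rw [div_lt_div_iff₀ (by positivity) (by norm_num)]
      nlinarith
    linarith
  have h3M : (0:ℝ) < 3 * M := by linarith
  have hnum : 0 < (3 * M - r₁) * (r₂ - 3 * M) * (3 * M + r₁ + r₂) := by
    have hden : (0:ℝ) < a ^ 2 * (3 * M) := by positivity
    have h := hκ3M
    rw [hκeq (3 * M) h3M] at h
    by_contra hc
    push_neg at hc
    have : (3 * M - r₁) * (r₂ - 3 * M) * (3 * M + r₁ + r₂) / (a ^ 2 * (3 * M)) ≤ 0 :=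
      div_nonpos_of_nonpos_of_nonneg hc hden.le
    linarith
  have h3M₁ : r₁ < 3 * M := by
    by_contra h
    push_neg at h
    have hfirst : (3 * M - r₁) * (r₂ - 3 * M) ≤ 0 :=
      mul_nonpos_iff.mpr (Or.inr ⟨by linarith, by linarith⟩)
    have : (3 * M - r₁) * (r₂ - 3 * M) * (3 * M + r₁ + r₂) ≤ 0 :=
      mul_nonpos_iff.mpr (Or.inr ⟨hfirst, by linarith⟩)
    linarith
  have h3M₂ : 3 * M < r₂ := by
    by_contra h
    push_neg at h
    have hfirst : (3 * M - r₁) * (r₂ - 3 * M) ≤ 0 :=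
      mul_nonpos_iff.mpr (Or.inl ⟨by linarith, by linarith⟩)
    have : (3 * M - r₁) * (r₂ - 3 * M) * (3 * M + r₁ + r₂) ≤ 0 :=
      mul_nonpos_iff.mpr (Or.inr ⟨hfirst, by linarith⟩)
    linarith
  -- upper bounds on κ
  set C : ℝ := (r₂ - r₁) * (r₁ + 2 * r₂) / (a ^ 2 * r₁) with hCdef
  have hCpos : 0 < C := by
    apply div_pos
    · nlinarith
    · positivity
  have hQnn : 0 ≤ (r₂ - r₁) * (r₁ + 2 * r₂) := by nlinarith
  have hκle₂ : ∀ r ∈ Set.Ioo r₁ r₂, κ r ≤ C * (r₂ - r) := by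
    intro r hr
    have hrpos : 0 < r := lt_trans hr₁pos hr.1
    rw [hκeq r hrpos, hCdef, div_mul_eq_mul_div]
    apply div_le_div₀ (by nlinarith [hr.2]) ?_ (by positivity) (by nlinarith [hr.1])
    have hP : (r - r₁) * (r + r₁ + r₂) ≤ (r₂ - r₁) * (r₁ + 2 * r₂) :=
      mul_le_mul (by linarith [hr.2]) (by linarith [hr.2]) (by linarith) (by linarith [hr.1])
    nlinarith [mul_le_mul_of_nonneg_right hP (show 0 ≤ r₂ - r by linarith [hr.2])]
  have hκle₁ : ∀ r ∈ Set.Ioo r₁ r₂, κ r ≤ C * (r - r₁) := by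
    intro r hr
    have hrpos : 0 < r := lt_trans hr₁pos hr.1
    rw [hκeq r hrpos, hCdef, div_mul_eq_mul_div]
    apply div_le_div₀ (by nlinarith [hr.1]) ?_ (by positivity) (by nlinarith [hr.1])
    have hP : (r₂ - r) * (r + r₁ + r₂) ≤ (r₂ - r₁) * (r₁ + 2 * r₂) :=
      mul_le_mul (by linarith [hr.1]) (by linarith [hr.2]) (by linarith) (by linarith [hr.1])
    nlinarith [mul_le_mul_of_nonneg_right hP (show 0 ≤ r - r₁ by linarith [hr.1])]
  -- positivity and continuity of g
  have hgpos : ∀ x ∈ Set.Ioo r₁ r₂, 0 < g x := by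
    intro x hx
    exact mul_pos (lt_trans hr₁pos hx.1) (Real.rpow_pos_of_pos (hκpos x hx) _)
  have hgcont : ∀ u v : ℝ, r₁ < u → v < r₂ → ContinuousOn g (Set.Icc u v) := by
    intro u v hu hv
    have hκcont : ContinuousOn κ (Set.Icc u v) := by
      rw [hκdef]
      have h0 : ∀ x ∈ Set.Icc u v, x ≠ 0 := fun x hx =>
        (show (0:ℝ) < x by linarith [hx.1]).ne'
      exact (continuousOn_const.sub (continuousOn_const.div continuousOn_id h0)).sub
        ((continuousOn_id.pow 2).div_const _)
    rw [hgdef]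
    apply ContinuousOn.mul continuousOn_id
    apply hκcont.rpow_const
    intro x hx
    exact Or.inl (hκpos x ⟨lt_of_lt_of_le hu hx.1, lt_of_le_of_lt hx.2 hv⟩).ne'
  have hgint : ∀ u v : ℝ, u ∈ Set.Ioo r₁ r₂ → v ∈ Set.Ioo r₁ r₂ →
      IntervalIntegrable g volume u v := by
    intro u v hu hv
    apply ContinuousOn.intervalIntegrable
    have hsub : Set.uIcc u v ⊆ Set.Icc (min u v) (max u v) := by
      rw [Set.uIcc]
    exact (hgcont (min u v) (max u v) (lt_min hu.1 hv.1) (max_lt hu.2 hv.2)).mono hsub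
  have h3MIoo : 3 * M ∈ Set.Ioo r₁ r₂ := ⟨h3M₁, h3M₂⟩
  -- pointwise comparison functions
  set D : ℝ := r₁ * C ^ (-(3:ℝ)/2) with hDdef
  have hDpos : 0 < D := mul_pos hr₁pos (Real.rpow_pos_of_pos hCpos _)
  have hgge₂ : ∀ x ∈ Set.Ioo r₁ r₂, D * (r₂ - x) ^ (-(3:ℝ)/2) ≤ g x := by
    intro x hx
    have hκx := hκpos x hx
    have hrx : (0:ℝ) < r₂ - x := by linarith [hx.2]
    have h1 : (C * (r₂ - x)) ^ (-(3:ℝ)/2) ≤ κ x ^ (-(3:ℝ)/2) :=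
      Real.rpow_le_rpow_of_nonpos hκx (hκle₂ x hx) (by norm_num)
    have h2 : (C * (r₂ - x)) ^ (-(3:ℝ)/2) = C ^ (-(3:ℝ)/2) * (r₂ - x) ^ (-(3:ℝ)/2) :=
      Real.mul_rpow hCpos.le hrx.le
    have h3 : r₁ * ((C * (r₂ - x)) ^ (-(3:ℝ)/2)) ≤ x * κ x ^ (-(3:ℝ)/2) :=
      mul_le_mul hx.1.le h1 (Real.rpow_nonneg (by positivity) _)
        (by linarith [hx.1] : (0:ℝ) ≤ x)
    calc D * (r₂ - x) ^ (-(3:ℝ)/2) = r₁ * ((C * (r₂ - x)) ^ (-(3:ℝ)/2)) := by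
          rw [h2, hDdef]; ring
      _ ≤ x * κ x ^ (-(3:ℝ)/2) := h3
      _ = g x := rfl
  have hgge₁ : ∀ x ∈ Set.Ioo r₁ r₂, D * (x - r₁) ^ (-(3:ℝ)/2) ≤ g x := by
    intro x hx
    have hκx := hκpos x hx
    have hrx : (0:ℝ) < x - r₁ := by linarith [hx.1]
    have h1 : (C * (x - r₁)) ^ (-(3:ℝ)/2) ≤ κ x ^ (-(3:ℝ)/2) :=
      Real.rpow_le_rpow_of_nonpos hκx (hκle₁ x hx) (by norm_num)
    have h2 : (C * (x - r₁)) ^ (-(3:ℝ)/2) = C ^ (-(3:ℝ)/2) * (x - r₁) ^ (-(3:ℝ)/2) :=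
      Real.mul_rpow hCpos.le hrx.le
    have h3 : r₁ * ((C * (x - r₁)) ^ (-(3:ℝ)/2)) ≤ x * κ x ^ (-(3:ℝ)/2) :=
      mul_le_mul hx.1.le h1 (Real.rpow_nonneg (by positivity) _)
        (by linarith [hx.1] : (0:ℝ) ≤ x)
    calc D * (x - r₁) ^ (-(3:ℝ)/2) = r₁ * ((C * (x - r₁)) ^ (-(3:ℝ)/2)) := by
          rw [h2, hDdef]; ring
      _ ≤ x * κ x ^ (-(3:ℝ)/2) := h3
      _ = g x := rfl
  -- key integral bounds
  have key₂ : ∀ v : ℝ, 3 * M ≤ v → v < r₂ →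
      D * (2 * (r₂ - v) ^ (-(1:ℝ)/2) - 2 * (r₂ - 3 * M) ^ (-(1:ℝ)/2)) ≤ F v := by
    intro v h1 h2
    have hvIoo : v ∈ Set.Ioo r₁ r₂ := ⟨by linarith, h2⟩
    have hIoo : Set.Icc (3 * M) v ⊆ Set.Ioo r₁ r₂ := fun x hx =>
      ⟨by linarith [hx.1], by linarith [hx.2]⟩
    have hint_c : IntervalIntegrable (fun x => D * (r₂ - x) ^ (-(3:ℝ)/2)) volume (3 * M) v := by
      apply ContinuousOn.intervalIntegrable
      apply ContinuousOn.mul continuousOn_const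
      apply ContinuousOn.rpow_const (continuousOn_const.sub continuousOn_id)
      intro x hx
      rw [Set.uIcc_of_le h1] at hx
      exact Or.inl (show (0:ℝ) < r₂ - x by linarith [hx.2]).ne'
    have hmono := intervalIntegral.integral_mono_on h1 hint_c (hgint (3 * M) v h3MIoo hvIoo)
      (fun x hx => hgge₂ x (hIoo hx))
    rw [intervalIntegral.integral_const_mul, ftc_right r₂ (3 * M) v h1 h2] at hmono
    exact hmono
  have key₁ : ∀ u : ℝ, r₁ < u → u ≤ 3 * M →
      F u ≤ D * (2 * (3 * M - r₁) ^ (-(1:ℝ)/2) - 2 * (u - r₁) ^ (-(1:ℝ)/2)) := by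
    intro u h1 h2
    have huIoo : u ∈ Set.Ioo r₁ r₂ := ⟨h1, by linarith⟩
    have hIoo : Set.Icc u (3 * M) ⊆ Set.Ioo r₁ r₂ := fun x hx =>
      ⟨by linarith [hx.1], by linarith [hx.2]⟩
    have hint_c : IntervalIntegrable (fun x => D * (x - r₁) ^ (-(3:ℝ)/2)) volume u (3 * M) := by
      apply ContinuousOn.intervalIntegrable
      apply ContinuousOn.mul continuousOn_const
      apply ContinuousOn.rpow_const (continuousOn_id.sub continuousOn_const)
      intro x hx
      rw [Set.uIcc_of_le h2] at hx
      exact Or.inl (show (0:ℝ) < x - r₁ by linarith [hx.1]).ne'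
    have hmono := intervalIntegral.integral_mono_on h2 hint_c (hgint u (3 * M) huIoo h3MIoo)
      (fun x hx => hgge₁ x (hIoo hx))
    rw [intervalIntegral.integral_const_mul, ftc_left r₁ u (3 * M) h2 h1] at hmono
    have hsymm : F u = -∫ x in u..(3 * M), g x :=
      intervalIntegral.integral_symm u (3 * M)
    rw [hsymm]
    linarith
  -- unboundedness above
  have hbig : ∀ t : ℝ, ∃ v, 3 * M ≤ v ∧ v < r₂ ∧ t < F v := by
    intro t
    have hms : (0:ℝ) < r₂ - 3 * M := by linarith
    set B : ℝ := (r₂ - 3 * M) ^ (-(1:ℝ)/2) with hBdef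
    have hBpos : 0 < B := Real.rpow_pos_of_pos hms _
    set K : ℝ := max ((t + 2 * D * B) / (2 * D)) B + 1 with hKdef
    have hKB : B < K := lt_of_le_of_lt (le_max_right _ _) (lt_add_one _)
    have hKpos : 0 < K := lt_trans hBpos hKB
    set ε : ℝ := K ^ (-(2:ℝ)) with hεdef
    have hεpos : 0 < ε := Real.rpow_pos_of_pos hKpos _
    have hεle : ε ≤ r₂ - 3 * M := by
      have h1 : K ^ (-(2:ℝ)) ≤ B ^ (-(2:ℝ)) :=
        Real.rpow_le_rpow_of_nonpos hBpos hKB.le (by norm_num)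
      have h2 : B ^ (-(2:ℝ)) = r₂ - 3 * M := by
        rw [hBdef, ← Real.rpow_mul hms.le]
        norm_num
      rw [hεdef, ← h2]
      exact h1
    refine ⟨r₂ - ε, by linarith, by linarith, ?_⟩
    have hkey := key₂ (r₂ - ε) (by linarith) (by linarith)
    have hv2 : r₂ - (r₂ - ε) = ε := by ring
    rw [hv2] at hkey
    have hεval : ε ^ (-(1:ℝ)/2) = K := by
      rw [hεdef, ← Real.rpow_mul hKpos.le]
      norm_num
    rw [hεval] at hkey
    have hdiv : (t + 2 * D * B) / (2 * D) < K := lt_of_le_of_lt (le_max_left _ _) (lt_add_one _)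
    have ht : t + 2 * D * B < K * (2 * D) := (div_lt_iff₀ (by positivity)).mp hdiv
    have hring : D * (2 * K - 2 * B) = K * (2 * D) - 2 * D * B := by ring
    linarith
  -- unboundedness below
  have hsmall : ∀ t : ℝ, ∃ u, r₁ < u ∧ u ≤ 3 * M ∧ F u < t := by
    intro t
    have hms : (0:ℝ) < 3 * M - r₁ := by linarith
    set B : ℝ := (3 * M - r₁) ^ (-(1:ℝ)/2) with hBdef
    have hBpos : 0 < B := Real.rpow_pos_of_pos hms _
    set K : ℝ := max ((2 * D * B - t) / (2 * D)) B + 1 with hKdef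
    have hKB : B < K := lt_of_le_of_lt (le_max_right _ _) (lt_add_one _)
    have hKpos : 0 < K := lt_trans hBpos hKB
    set ε : ℝ := K ^ (-(2:ℝ)) with hεdef
    have hεpos : 0 < ε := Real.rpow_pos_of_pos hKpos _
    have hεle : ε ≤ 3 * M - r₁ := by
      have h1 : K ^ (-(2:ℝ)) ≤ B ^ (-(2:ℝ)) :=
        Real.rpow_le_rpow_of_nonpos hBpos hKB.le (by norm_num)
      have h2 : B ^ (-(2:ℝ)) = 3 * M - r₁ := by
        rw [hBdef, ← Real.rpow_mul hms.le]
        norm_num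
      rw [hεdef, ← h2]
      exact h1
    refine ⟨r₁ + ε, by linarith, by linarith, ?_⟩
    have hkey := key₁ (r₁ + ε) (by linarith) (by linarith)
    have hv2 : r₁ + ε - r₁ = ε := by ring
    rw [hv2] at hkey
    have hεval : ε ^ (-(1:ℝ)/2) = K := by
      rw [hεdef, ← Real.rpow_mul hKpos.le]
      norm_num
    rw [hεval] at hkey
    have hdiv : (2 * D * B - t) / (2 * D) < K := lt_of_le_of_lt (le_max_left _ _) (lt_add_one _)
    have ht : 2 * D * B - t < K * (2 * D) := (div_lt_iff₀ (by positivity)).mp hdiv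
    have hring : D * (2 * B - 2 * K) = 2 * D * B - K * (2 * D) := by ring
    linarith
  -- strict monotonicity of F
  have hFadd : ∀ p ∈ Set.Ioo r₁ r₂, ∀ q ∈ Set.Ioo r₁ r₂, F q = F p + ∫ x in p..q, g x := by
    intro p hp q hq
    have := intervalIntegral.integral_add_adjacent_intervals
      (hgint (3 * M) p h3MIoo hp) (hgint p q hp hq)
    rw [hFdef]
    simp only
    linarith [this]
  have hmono : ∀ p ∈ Set.Ioo r₁ r₂, ∀ q ∈ Set.Ioo r₁ r₂, p < q → F p < F q := by
    intro p hp q hq hpq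
    have hpos : 0 < ∫ x in p..q, g x :=
      intervalIntegral.intervalIntegral_pos_of_pos_on (hgint p q hp hq)
        (fun x hx => hgpos x ⟨lt_trans hp.1 hx.1, lt_trans hx.2 hq.2⟩) hpq
    rw [hFadd p hp q hq]
    linarith
  -- continuity of F on compact subintervals
  have hFcont : ∀ u v : ℝ, r₁ < u → u ≤ v → v < r₂ → ContinuousOn F (Set.Icc u v) := by
    intro u v hu huv hv
    have hInt : IntegrableOn g (Set.uIcc u v) volume := by
      rw [Set.uIcc_of_le huv]
      exact (hgcont u v hu hv).integrableOn_Icc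
    have hprim := intervalIntegral.continuousOn_primitive_interval hInt
    rw [Set.uIcc_of_le huv] at hprim
    apply ContinuousOn.congr (f := fun r => F u + ∫ x in u..r, g x)
    · exact continuousOn_const.add hprim
    · intro r hr
      show F r = F u + ∫ x in u..r, g x
      exact hFadd u ⟨hu, lt_of_le_of_lt huv hv⟩ r ⟨lt_of_lt_of_le hu hr.1, lt_of_le_of_lt hr.2 hv⟩
  -- reformulating σ = 0
  set t : ℝ := -(s * a ^ 2 / H) with htdef
  have hiff : ∀ r ∈ Set.Ioo r₁ r₂, (σ r = 0 ↔ F r = t) := by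
    intro r hr
    have hκr := hκpos r hr
    have hkpos : 0 < κ r ^ ((1:ℝ)/2) := Real.rpow_pos_of_pos hκr _
    have hfac : σ r = κ r ^ ((1:ℝ)/2) * (H / a ^ 2) * (F r - t) := by
      rw [hσ r hr, htdef]
      have hk : (1 - 2 * M / r - r ^ 2 / a ^ 2) = κ r := rfl
      rw [hk]
      have hFr : (∫ x in (3 * M)..r, x * κ x ^ (-(3:ℝ)/2)) = F r := rfl
      rw [hFr]
      field_simp
      ring
    rw [hfac]
    constructor
    · intro h
      rcases mul_eq_zero.mp h with h' | h'
      · rcases mul_eq_zero.mp h' with h'' | h''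
        · exact absurd h'' hkpos.ne'
        · exact absurd h'' (div_ne_zero hH (by positivity))
      · linarith [sub_eq_zero.mp h']
    · intro h
      rw [h, sub_self, mul_zero]
  -- existence
  obtain ⟨u, hu1, hu2, hu3⟩ := hsmall t
  obtain ⟨v, hv1, hv2, hv3⟩ := hbig t
  have huIoo : u ∈ Set.Ioo r₁ r₂ := ⟨hu1, by linarith⟩
  have hvIoo : v ∈ Set.Ioo r₁ r₂ := ⟨by linarith, hv2⟩
  have huv : u ≤ v := by linarith
  have hsub : Set.Icc u v ⊆ Set.Ioo r₁ r₂ := fun x hx =>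
    ⟨lt_of_lt_of_le hu1 hx.1, lt_of_le_of_lt hx.2 hv2⟩
  have hivt := intermediate_value_Icc huv (hFcont u v hu1 huv hv2)
  have htmem : t ∈ Set.Icc (F u) (F v) := ⟨hu3.le, hv3.le⟩
  obtain ⟨r₀, hr₀mem, hr₀val⟩ := hivt htmem
  have hr₀Ioo : r₀ ∈ Set.Ioo r₁ r₂ := hsub hr₀mem
  refine ⟨r₀, ⟨hr₀Ioo, (hiff r₀ hr₀Ioo).mpr hr₀val⟩, ?_⟩
  rintro y ⟨hyIoo, hy0⟩
  have hyt : F y = t := (hiff y hyIoo).mp hy0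
  rcases lt_trichotomy y r₀ with h | h | h
  · have := hmono y hyIoo r₀ hr₀Ioo h
    rw [hyt, hr₀val] at this
    exact absurd this (lt_irrefl t)
  · exact h
  · have := hmono r₀ hr₀Ioo y hyIoo h
    rw [hyt, hr₀val] at this
    exact absurd this (lt_irrefl t)
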